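/- For every integer n ≥ 2, the even cycle C_{2n} (the cycle graph on 2n vertices) is [n]-edge geodetic, and the minimum number of n-geodesics needed to cover all edges of C_{2n} is 2, i.e. |gen(C_{2n})| = 2. -/

import Mathlib

open SimpleGraph

/-- A walk is a `k`-geodesic if it has length `k` and is a shortest path
between its endpoints. -/
def IsKGeodesic {V : Type*} (G : SimpleGraph V) (k : ℕ) {u v : V} (w : G.Walk u v) : Prop :=
  w.length = k ∧ G.dist u v = k

/-- A graph is `k`-edge geodetic if every edge lies on some `k`-geodesic. -/
def IsEdgeGeodetic {V : Type*} (G : SimpleGraph V) (k : ℕ) : Prop :=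
  ∀ e ∈ G.edgeSet, ∃ (u v : V) (w : G.Walk u v), IsKGeodesic G k w ∧ e ∈ w.edges

/-- A graph is `[k]`-edge geodetic if it is `k`-edge geodetic but not `(k+1)`-edge geodetic. -/
def IsMaxEdgeGeodetic {V : Type*} (G : SimpleGraph V) (k : ℕ) : Prop :=
  IsEdgeGeodetic G k ∧ ¬ IsEdgeGeodetic G (k + 1)

/-- `genNum G k` is the minimum number of `k`-geodesics of `G` whose edges
together cover all edges of `G`. -/
noncomputable def genNum {V : Type*} (G : SimpleGraph V) (k : ℕ) : ℕ :=
  sInf {r : ℕ | ∃ f : Fin r → Σ u : V, Σ v : V, G.Walk u v,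
    (∀ i, IsKGeodesic G k (f i).2.2) ∧
    ∀ e ∈ G.edgeSet, ∃ i, e ∈ (f i).2.2.edges}

open Fin.NatCast Fin.CommRing

lemma adj_succ' {m : ℕ} [NeZero m] (hm : 2 ≤ m) (u : Fin m) :
    (cycleGraph m).Adj u (u + 1) := by
  rw [cycleGraph_adj']
  right
  rw [add_sub_cancel_left, Fin.val_one', Nat.mod_eq_of_lt hm]

def walkUp' {m : ℕ} [NeZero m] (hm : 2 ≤ m) : (ℓ : ℕ) → (u : Fin m) →
    (cycleGraph m).Walk u (u + (ℓ : Fin m))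
  | 0, u => Walk.nil.copy rfl (by simp)
  | (ℓ+1), u => (Walk.cons (adj_succ' hm u) (walkUp' hm ℓ (u + 1))).copy rfl (by push_cast; ring)

lemma walkUp'_length {m : ℕ} [NeZero m] (hm : 2 ≤ m) (ℓ : ℕ) (u : Fin m) :
    (walkUp' hm ℓ u).length = ℓ := by
  induction ℓ generalizing u with
  | zero => simp [walkUp']
  | succ ℓ ih => simp [walkUp', ih]

lemma cyc_endpoint {m : ℕ} [NeZero m] (u v : Fin m) :
    u + (((v - u).val : ℕ) : Fin m) = v := by
  rw [Fin.cast_val_eq_self]; ring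

lemma cyc_dist_le {m : ℕ} [NeZero m] (hm : 2 ≤ m) (u v : Fin m) :
    (cycleGraph m).dist u v ≤ (v - u).val := by
  calc (cycleGraph m).dist u v
      ≤ ((walkUp' hm (v - u).val u).copy rfl (cyc_endpoint u v)).length :=
        dist_le _
    _ = (v - u).val := by rw [Walk.length_copy, walkUp'_length]

lemma cyc_reachable {m : ℕ} [NeZero m] (hm : 2 ≤ m) (u v : Fin m) :
    (cycleGraph m).Reachable u v := by
  exact ⟨(walkUp' hm (v - u).val u).copy rfl (cyc_endpoint u v)⟩

lemma cyc_dist_le_half {n : ℕ} (hn : 2 ≤ n) :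
    haveI : NeZero (2 * n) := ⟨by omega⟩
    ∀ u v : Fin (2 * n), (cycleGraph (2 * n)).dist u v ≤ n := by
  haveI : NeZero (2 * n) := ⟨by omega⟩
  intro u v
  have hm : 2 ≤ 2 * n := by omega
  by_cases huv : u = v
  · subst huv; rw [SimpleGraph.dist_self]; exact Nat.zero_le n
  · have h1 := cyc_dist_le hm u v
    have h2 := cyc_dist_le hm v u
    rw [SimpleGraph.dist_comm] at h2
    have hd1 : (v - u).val < 2 * n := (v - u).isLt
    have hd2 : (u - v).val < 2 * n := (u - v).isLt
    have hpos : (v - u).val ≠ 0 := by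
      intro h
      apply huv
      have h0 : v - u = 0 := Fin.ext (by simpa using h)
      exact (sub_eq_zero.mp h0).symm
    have hsum : (2 * n) ∣ ((v - u).val + (u - v).val) := by
      rw [← Fin.natCast_eq_zero (n := 2 * n)]
      push_cast [Fin.cast_val_eq_self]
      ring
    have : (v - u).val + (u - v).val = 2 * n := by
      rcases hsum with ⟨k, hk⟩
      have hk1 : k = 1 := by
        by_contra hne
        rcases Nat.lt_or_ge k 2 with h | h
        · interval_cases k <;> omega
        · have := Nat.mul_le_mul_left (2 * n) h
          omega
      subst hk1; omega
    omega

lemma walk_sub' {m : ℕ} [NeZero m] (hm : 2 ≤ m) {u v : Fin m} (w : (cycleGraph m).Walk u v) :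
    ∃ a b : ℕ, a + b = w.length ∧ (a : Fin m) - (b : Fin m) = v - u := by
  induction w with
  | nil => exact ⟨0, 0, rfl, by simp⟩
  | @cons u x v h p ih =>
    obtain ⟨a, b, hab, hsub⟩ := ih
    rcases cycleGraph_adj'.mp h with h1 | h1
    · have hx : u - x = 1 := Fin.ext (by rw [Fin.val_one', Nat.mod_eq_of_lt hm]; exact h1)
      refine ⟨a, b + 1, by rw [Walk.length_cons]; omega, ?_⟩
      push_cast
      linear_combination hsub + hx
    · have hx : x - u = 1 := Fin.ext (by rw [Fin.val_one', Nat.mod_eq_of_lt hm]; exact h1)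
      refine ⟨a + 1, b, by rw [Walk.length_cons]; omega, ?_⟩
      push_cast
      linear_combination hsub - hx

lemma cast_sub_ne {n : ℕ} (hn : 2 ≤ n) (a b : ℕ) (h : a + b < n) :
    haveI : NeZero (2 * n) := ⟨by omega⟩
    (a : Fin (2 * n)) - (b : Fin (2 * n)) ≠ (n : Fin (2 * n)) := by
  haveI : NeZero (2 * n) := ⟨by omega⟩
  intro h'
  have hnn : (n : Fin (2*n)) + (n : Fin (2*n)) = 0 := by
    rw [← Nat.cast_add]
    have : n + n = 2 * n := by ring
    rw [this, Fin.natCast_self]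
  rcases le_total b a with hba | hba
  · have : ((a - b : ℕ) : Fin (2*n)) = (n : Fin (2*n)) := by rw [Nat.cast_sub hba]; exact h'
    have hv := congrArg Fin.val this
    rw [Fin.val_natCast, Fin.val_natCast] at hv
    rw [Nat.mod_eq_of_lt (by omega), Nat.mod_eq_of_lt (by omega)] at hv
    omega
  · have h2 : ((b - a : ℕ) : Fin (2*n)) = (n : Fin (2*n)) := by
      rw [Nat.cast_sub hba]
      linear_combination -h' - hnn
    have hv := congrArg Fin.val h2
    rw [Fin.val_natCast, Fin.val_natCast] at hv
    rw [Nat.mod_eq_of_lt (by omega), Nat.mod_eq_of_lt (by omega)] at hv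
    omega

lemma cyc_dist_antipode {n : ℕ} (hn : 2 ≤ n) :
    haveI : NeZero (2 * n) := ⟨by omega⟩
    ∀ u : Fin (2 * n), (cycleGraph (2 * n)).dist u (u + (n : Fin (2 * n))) = n := by
  haveI : NeZero (2 * n) := ⟨by omega⟩
  intro u
  have hm : 2 ≤ 2 * n := by omega
  have hle : (cycleGraph (2 * n)).dist u (u + (n : Fin (2 * n))) ≤ n := by
    calc _ ≤ (walkUp' hm n u).length := dist_le _
      _ = n := walkUp'_length hm n u
  rcases lt_or_eq_of_le hle with hlt | heq
  · exfalso
    obtain ⟨p, hp⟩ := (cyc_reachable hm u (u + (n : Fin (2 * n)))).exists_walk_length_eq_dist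
    obtain ⟨a, b, hab, hsub⟩ := walk_sub' hm p
    rw [add_sub_cancel_left] at hsub
    exact cast_sub_ne hn a b (by omega) hsub
  · exact heq

lemma walkUp'_edges {m : ℕ} [NeZero m] (hm : 2 ≤ m) (ℓ : ℕ) (u : Fin m) (i : ℕ) (hi : i < ℓ) :
    s(u + (i : Fin m), u + (i : Fin m) + 1) ∈ (walkUp' hm ℓ u).edges := by
  induction ℓ generalizing u i with
  | zero => omega
  | succ ℓ ih =>
    simp only [walkUp', Walk.edges_copy, Walk.edges_cons, List.mem_cons]
    rcases Nat.eq_zero_or_pos i with h0 | h0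
    · left; subst h0; push_cast; ring_nf
    · right
      have := ih (u + 1) (i - 1) (by omega)
      convert this using 2 <;>
      · have : i = (i - 1) + 1 := by omega
        rw [this]; push_cast; ring

lemma edge_form {n : ℕ} (hn : 2 ≤ n) {e : Sym2 (Fin (2 * n))}
    (he : e ∈ (cycleGraph (2 * n)).edgeSet) :
    haveI : NeZero (2 * n) := ⟨by omega⟩
    ∃ v : Fin (2 * n), e = s(v, v + 1) := by
  haveI : NeZero (2 * n) := ⟨by omega⟩
  have hm : 2 ≤ 2 * n := by omega
  induction e with
  | _ a b =>
    rw [SimpleGraph.mem_edgeSet] at he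
    rcases cycleGraph_adj'.mp he with h1 | h1
    · refine ⟨b, ?_⟩
      have hx : a - b = 1 := Fin.ext (by rw [Fin.val_one', Nat.mod_eq_of_lt hm]; exact h1)
      have : a = b + 1 := by linear_combination hx
      rw [this, Sym2.eq_swap]
    · refine ⟨a, ?_⟩
      have hx : b - a = 1 := Fin.ext (by rw [Fin.val_one', Nat.mod_eq_of_lt hm]; exact h1)
      have : b = a + 1 := by linear_combination hx
      rw [this]

/-- For every integer `n ≥ 2`, the even cycle `C_{2n}` is `[n]`-edge geodetic and the
minimum number of `n`-geodesics needed to cover all its edges is `2`. -/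
theorem cycle_even_maxEdgeGeodetic (n : ℕ) (hn : 2 ≤ n) :
    IsMaxEdgeGeodetic (cycleGraph (2 * n)) n ∧ genNum (cycleGraph (2 * n)) n = 2 := by
  classical
  haveI : NeZero (2 * n) := ⟨by omega⟩
  have hm : 2 ≤ 2 * n := by omega
  have hgeo : ∀ u : Fin (2 * n), IsKGeodesic (cycleGraph (2 * n)) n (walkUp' hm n u) :=
    fun u => ⟨walkUp'_length hm n u, cyc_dist_antipode hn u⟩
  have hedge : ∀ v : Fin (2 * n), s(v, v + 1) ∈ (walkUp' hm n v).edges := by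
    intro v
    have := walkUp'_edges hm n v 0 (by omega)
    simpa using this
  constructor
  · constructor
    · intro e he
      obtain ⟨v, rfl⟩ := edge_form hn he
      exact ⟨v, v + (n : Fin (2 * n)), walkUp' hm n v, hgeo v, hedge v⟩
    · intro hgeod
      obtain ⟨u, v, w, ⟨hlen, hdist⟩, hmem⟩ := hgeod s((0 : Fin (2 * n)), (0 : Fin (2 * n)) + 1)
        ((SimpleGraph.mem_edgeSet _).mpr (adj_succ' hm 0))
      have := cyc_dist_le_half hn u v
      omega
  · have mem2 : ∃ f : Fin 2 → Σ u : Fin (2 * n), Σ v : Fin (2 * n), (cycleGraph (2 * n)).Walk u v,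
        (∀ i, IsKGeodesic (cycleGraph (2 * n)) n (f i).2.2) ∧
        ∀ e ∈ (cycleGraph (2 * n)).edgeSet, ∃ i, e ∈ (f i).2.2.edges := by
      refine ⟨![⟨0, _, walkUp' hm n 0⟩,
                ⟨(n : Fin (2 * n)), _, walkUp' hm n (n : Fin (2 * n))⟩], ?_, ?_⟩
      · intro i
        fin_cases i
        · exact hgeo 0
        · exact hgeo _
      · intro e he
        obtain ⟨v, rfl⟩ := edge_form hn he
        by_cases hv : v.val < n
        · refine ⟨0, ?_⟩
          have h := walkUp'_edges hm n 0 v.val hv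
          simp only [zero_add, Fin.cast_val_eq_self] at h
          simpa using h
        · refine ⟨1, ?_⟩
          have h := walkUp'_edges hm n (n : Fin (2 * n)) (v.val - n) (by omega)
          have key : (n : Fin (2 * n)) + (((v.val - n : ℕ) : ℕ) : Fin (2 * n)) = v := by
            rw [← Nat.cast_add]
            have h2 : n + (v.val - n) = v.val := by omega
            rw [h2, Fin.cast_val_eq_self]
          rw [key] at h
          simpa using h
    apply le_antisymm
    · exact Nat.sInf_le mem2
    · refine le_csInf ⟨2, mem2⟩ ?_
      rintro m ⟨f, hg, hc⟩
      by_contra hlt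
      push_neg at hlt
      have hinj : Function.Injective (fun v : Fin (2 * n) => s(v, v + 1)) := by
        intro v w hvw
        simp only [Sym2.eq_iff] at hvw
        rcases hvw with ⟨h1, _⟩ | ⟨h1, h2⟩
        · exact h1
        · exfalso
          have h3 : ((2 : ℕ) : Fin (2 * n)) = 0 := by push_cast; linear_combination -h1 + h2
          have hdvd := Fin.natCast_eq_zero.mp h3
          have := Nat.le_of_dvd (by omega) hdvd
          omega
      have hsub : (Finset.univ.image (fun v : Fin (2 * n) => s(v, v + 1))) ⊆
          Finset.univ.biUnion (fun i : Fin m => (f i).2.2.edges.toFinset) := by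
        intro e hemem
        simp only [Finset.mem_image] at hemem
        obtain ⟨v, _, rfl⟩ := hemem
        obtain ⟨i, hi⟩ := hc s(v, v + 1) ((SimpleGraph.mem_edgeSet _).mpr (adj_succ' hm v))
        exact Finset.mem_biUnion.mpr ⟨i, Finset.mem_univ i, List.mem_toFinset.mpr hi⟩
      have h1 := Finset.card_le_card hsub
      rw [Finset.card_image_of_injective _ hinj, Finset.card_univ, Fintype.card_fin] at h1
      have h2 := Finset.card_biUnion_le (s := (Finset.univ : Finset (Fin m)))
        (t := fun i => (f i).2.2.edges.toFinset)
      have h3 : ∀ i : Fin m, ((f i).2.2.edges.toFinset).card ≤ n := by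
        intro i
        calc ((f i).2.2.edges.toFinset).card ≤ (f i).2.2.edges.length := List.toFinset_card_le _
          _ = (f i).2.2.length := (f i).2.2.length_edges
          _ = n := (hg i).1
      have h4 : ∑ i : Fin m, ((f i).2.2.edges.toFinset).card ≤ m * n := by
        calc ∑ i : Fin m, ((f i).2.2.edges.toFinset).card ≤ ∑ _i : Fin m, n :=
              Finset.sum_le_sum (fun i _ => h3 i)
          _ = m * n := by rw [Finset.sum_const, Finset.card_univ, Fintype.card_fin, smul_eq_mul]
      have h5 : m * n ≤ 1 * n := Nat.mul_le_mul_right n (by omega)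
      omega
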